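/- arXiv:cs/9809109 — 2 statements merged into one kernel-verified Lean document; each statement's English description precedes it below -/
import Mathlib

section
/- If a finite connected graph G has an even number of vertices, then G has a spanning subgraph in which every vertex has odd degree. -/
open Finset

section Aux

variable {V : Type} [DecidableEq V]

instance : Std.Commutative (α := Finset (Sym2 V)) symmDiff := ⟨symmDiff_comm⟩
instance : Std.Associative (α := Finset (Sym2 V)) symmDiff := ⟨symmDiff_assoc⟩

lemma odd_of_cast_eq_one (n : ℕ) (h : (n : ZMod 2) = 1) : Odd n := by
  rcases Nat.even_or_odd n with he | ho
  · exfalso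
    obtain ⟨k, hk⟩ := he
    subst hk
    push_cast at h
    have h0 : (k : ZMod 2) + k = 0 := by
      have : (k : ZMod 2) + k = 2 * k := by ring
      rw [this, show (2 : ZMod 2) = 0 from rfl, zero_mul]
    rw [h0] at h
    exact one_ne_zero h.symm
  · exact ho

lemma filter_symmDiff' (A B : Finset (Sym2 V)) (p : Sym2 V → Prop) [DecidablePred p] :
    (symmDiff A B).filter p = symmDiff (A.filter p) (B.filter p) := by
  ext e; simp [Finset.mem_symmDiff, Finset.mem_filter]; tauto

lemma card_symmDiff_par (A B : Finset (Sym2 V)) :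
    (((symmDiff A B).card : ZMod 2)) = (A.card : ZMod 2) + B.card := by
  have h1 : symmDiff A B = (A \ B) ∪ (B \ A) := by
    ext e; simp [Finset.mem_symmDiff]
  have hd : Disjoint (A \ B) (B \ A) := by
    apply Finset.disjoint_left.2; intro a ha hb
    simp at ha hb; tauto
  have h2 : (symmDiff A B).card = (A \ B).card + (B \ A).card := by
    rw [h1, Finset.card_union_of_disjoint hd]
  have h3 : (A \ B).card + (A ∩ B).card = A.card := Finset.card_sdiff_add_card_inter A B
  have h4 : (B \ A).card + (B ∩ A).card = B.card := Finset.card_sdiff_add_card_inter B A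
  have h5 : (B ∩ A) = (A ∩ B) := Finset.inter_comm _ _
  rw [h5] at h4
  have h : (symmDiff A B).card + 2 * (A ∩ B).card = A.card + B.card := by omega
  have h' : (((symmDiff A B).card + 2 * (A ∩ B).card : ℕ) : ZMod 2)
      = ((A.card + B.card : ℕ) : ZMod 2) := by rw [h]
  push_cast at h'
  rw [show (2 : ZMod 2) = 0 from rfl, zero_mul, add_zero] at h'
  exact h'

variable {G : SimpleGraph V}

def wfin : ∀ {a b : V}, G.Walk a b → Finset (Sym2 V)
  | _, _, SimpleGraph.Walk.nil => ∅
  | _, _, @SimpleGraph.Walk.cons _ _ u c _ _ p => symmDiff {s(u, c)} (wfin p)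

lemma wfin_subset [Fintype V] [DecidableRel G.Adj] {a b : V} (w : G.Walk a b) :
    wfin w ⊆ G.edgeFinset := by
  induction w with
  | nil => simp [wfin]
  | cons h p ih =>
    rw [wfin]
    intro e he
    rw [Finset.mem_symmDiff] at he
    rcases he with ⟨he, _⟩ | ⟨he, _⟩
    · simp only [Finset.mem_singleton] at he
      subst he; simpa [SimpleGraph.mem_edgeFinset] using h
    · exact ih he

lemma wfin_parity {a b : V} (w : G.Walk a b) (x : V) :
    (((wfin w).filter (fun e => x ∈ e)).card : ZMod 2)
      = (if x = a then 1 else 0) + (if x = b then 1 else 0) := by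
  have h11 : (1 : ZMod 2) + 1 = 0 := rfl
  induction w with
  | nil =>
    simp only [wfin, Finset.filter_empty, Finset.card_empty, Nat.cast_zero]
    split_ifs <;> simp [h11]
  | @cons u c d h p ih =>
    rw [wfin, filter_symmDiff', card_symmDiff_par, ih]
    have hne : u ≠ c := h.ne
    have hs : (((({s(u, c)} : Finset (Sym2 V)).filter (fun e => x ∈ e)).card : ℕ) : ZMod 2)
        = if x = u ∨ x = c then 1 else 0 := by
      rw [Finset.filter_singleton]
      by_cases hx : x = u ∨ x = c
      · rw [if_pos (by simpa [Sym2.mem_iff] using hx), if_pos hx, Finset.card_singleton,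
          Nat.cast_one]
      · rw [if_neg (by simpa [Sym2.mem_iff] using hx), if_neg hx, Finset.card_empty,
          Nat.cast_zero]
    rw [hs]
    rcases eq_or_ne x u with hu | hu <;> rcases eq_or_ne x c with hc | hc
    · exact absurd (hu ▸ hc) hne
    · subst hu
      rw [if_pos (Or.inl rfl), if_neg hc, if_pos rfl, zero_add]
    · subst hc
      rw [if_pos (Or.inr rfl), if_pos rfl, if_neg hu, ← add_assoc, h11, zero_add]
    · rw [if_neg (by tauto), if_neg hc, if_neg hu, zero_add, zero_add]

end Aux

/-- A finite connected graph with an even number of vertices has a spanning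
subgraph (given by an edge set `T`) in which every vertex has odd degree. -/
theorem stmt_2 {V : Type} [Fintype V] [DecidableEq V]
    (G : SimpleGraph V) [DecidableRel G.Adj] (hconn : G.Connected)
    (heven : Even (Fintype.card V)) :
    ∃ T ⊆ G.edgeFinset, ∀ v : V, Odd ((T.filter (fun e => v ∈ e)).card) := by
  obtain ⟨v₀⟩ := hconn.nonempty
  have w : ∀ v : V, G.Walk v₀ v := fun v => Classical.choice (hconn v₀ v)
  set f : V → Finset (Sym2 V) := fun v => wfin (w v) with hf
  have key : ∀ s : Finset V,
      (s.fold symmDiff ∅ f ⊆ G.edgeFinset) ∧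
      ∀ x : V, (((s.fold symmDiff ∅ f).filter (fun e => x ∈ e)).card : ZMod 2)
        = ∑ v ∈ s, ((if x = v₀ then 1 else 0) + (if x = v then 1 else 0)) := by
    intro s
    induction s using Finset.induction_on with
    | empty => simp
    | @insert a s ha ih =>
      rw [Finset.fold_insert ha]
      constructor
      · intro e he
        rw [Finset.mem_symmDiff] at he
        rcases he with ⟨he, _⟩ | ⟨he, _⟩
        · exact wfin_subset _ he
        · exact ih.1 he
      · intro x
        rw [filter_symmDiff', card_symmDiff_par, ih.2 x, Finset.sum_insert ha,
          wfin_parity]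
  refine ⟨Finset.univ.fold symmDiff ∅ f, (key univ).1, fun x => ?_⟩
  have hp := (key univ).2 x
  have h1 : ∑ v : V, ((if x = v₀ then (1 : ZMod 2) else 0) + (if x = v then 1 else 0))
      = (Fintype.card V) * (if x = v₀ then 1 else 0) + 1 := by
    rw [Finset.sum_add_distrib, Finset.sum_const, Finset.sum_ite_eq]
    simp only [Finset.mem_univ, if_true, nsmul_eq_mul, Finset.card_univ]
  rw [h1] at hp
  have h2 : ((Fintype.card V : ZMod 2)) = 0 := by
    obtain ⟨k, hk⟩ := heven
    rw [hk]
    push_cast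
    have : (k : ZMod 2) + k = 2 * k := by ring
    rw [this, show (2 : ZMod 2) = 0 from rfl, zero_mul]
  rw [h2, zero_mul, zero_add] at hp
  exact odd_of_cast_eq_one _ hp
end

section
/- A minimum-weight perfect matching in the shortest-path metric of a graph corresponds to a collection of pairwise edge-disjoint shortest paths: if two of the paths shared an edge, one could exchange endpoints to obtain a strictly lighter perfect matching. -/
/-- A minimum-weight perfect matching in the shortest-path metric of a
positively weighted connected graph can be realized by pairwise edge-disjoint
shortest paths. -/
theorem stmt_8 {V : Type} [Fintype V] [DecidableEq V]
    (G : SimpleGraph V) (hconn : G.Connected)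
    (wt : Sym2 V → ℝ) (hpos : ∀ e ∈ G.edgeSet, 0 < wt e)
    (d : V → V → ℝ)
    (hd : ∀ u v : V,
      IsLeast {x : ℝ | ∃ p : G.Walk u v, x = (p.edges.map wt).sum} (d u v))
    (m : V → V) (hinv : ∀ x, m (m x) = x) (hne : ∀ x, m x ≠ x)
    (hmin : ∀ m' : V → V, (∀ x, m' (m' x) = x) → (∀ x, m' x ≠ x) →
      (∑ x : V, d x (m x)) ≤ ∑ x : V, d x (m' x)) :
    ∃ P : (x : V) → G.Walk x (m x),
      (∀ x : V, ((P x).edges.map wt).sum = d x (m x)) ∧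
      (∀ x y : V, y ≠ x → y ≠ m x →
        ∀ e : Sym2 V, e ∈ (P x).edges → e ∉ (P y).edges) := by
  classical
  -- basic facts about d
  have dattain : ∀ u v : V, ∃ p : G.Walk u v, ((p.edges.map wt).sum) = d u v := by
    intro u v
    obtain ⟨⟨p, hp⟩, -⟩ := hd u v
    exact ⟨p, hp.symm⟩
  have dle : ∀ (u v : V) (p : G.Walk u v), d u v ≤ (p.edges.map wt).sum := by
    intro u v p
    exact (hd u v).2 ⟨p, rfl⟩
  have wrev : ∀ {u v : V} (p : G.Walk u v),
      ((p.reverse.edges.map wt).sum) = (p.edges.map wt).sum := by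
    intro u v p
    rw [SimpleGraph.Walk.edges_reverse, List.map_reverse, List.sum_reverse]
  have dsymm : ∀ u v : V, d u v = d v u := by
    intro u v
    obtain ⟨p, hp⟩ := dattain u v
    obtain ⟨q, hq⟩ := dattain v u
    have h1 := dle u v q.reverse
    have h2 := dle v u p.reverse
    rw [wrev] at h1 h2
    linarith
  have dself : ∀ u : V, d u u ≤ 0 := by
    intro u
    have := dle u u SimpleGraph.Walk.nil
    simpa using this
  have dtri : ∀ u v w : V, d u w ≤ d u v + d v w := by
    intro u v w
    obtain ⟨p, hp⟩ := dattain u v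
    obtain ⟨q, hq⟩ := dattain v w
    have h := dle u w (p.append q)
    rw [SimpleGraph.Walk.edges_append, List.map_append, List.sum_append, hp, hq] at h
    exact h
  have dadj : ∀ {u v : V}, G.Adj u v → d u v ≤ wt s(u, v) := by
    intro u v h
    have := dle u v (SimpleGraph.Walk.cons h SimpleGraph.Walk.nil)
    simpa using this
  -- key decomposition lemma
  have key : ∀ {u v : V} (p : G.Walk u v) (a b : V), s(a, b) ∈ p.edges →
      d u a + wt s(a, b) + d b v ≤ (p.edges.map wt).sum ∨
      d u b + wt s(a, b) + d a v ≤ (p.edges.map wt).sum := by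
    intro u v p
    induction p with
    | nil => intro a b h; simp at h
    | @cons u w v h q ih =>
      intro a b hab
      rw [SimpleGraph.Walk.edges_cons] at hab
      have hsum : (((SimpleGraph.Walk.cons h q).edges.map wt).sum)
          = wt s(u, w) + (q.edges.map wt).sum := by
        rw [SimpleGraph.Walk.edges_cons]; simp
      rcases List.mem_cons.mp hab with heq | hmem
      · have hq := dle w v q
        rcases Sym2.eq_iff.mp heq with ⟨ha, hb⟩ | ⟨ha, hb⟩
        · left
          subst ha; subst hb
          rw [hsum]; linarith [dself a, hq]
        · right
          subst ha; subst hb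
          rw [heq, hsum]; linarith [dself b, hq]
      · rcases ih a b hmem with h1 | h1
        · left
          have h2 : d u a ≤ wt s(u, w) + d w a :=
            le_trans (dtri u w a) (by linarith [dadj h])
          rw [hsum]; linarith
        · right
          have h2 : d u b ≤ wt s(u, w) + d w b :=
            le_trans (dtri u w b) (by linarith [dadj h])
          rw [hsum]; linarith
  -- exchange lemma
  have exch : ∀ y z : V, z ≠ y → z ≠ m y →
      d y z + d (m y) (m z) < d y (m y) + d z (m z) → False := by
    intro y z hzy hzmy hlt
    have d3 : y ≠ m y := Ne.symm (hne y)
    have d4 : z ≠ m z := Ne.symm (hne z)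
    have d5 : y ≠ m z := by
      intro hc
      apply hzmy
      rw [hc, hinv]
    have d6 : m y ≠ m z := by
      intro hc
      have := congrArg m hc
      rw [hinv, hinv] at this
      exact hzy this.symm
    set m' : V → V := fun w =>
      if w = y then z else if w = z then y
      else if w = m y then m z else if w = m z then m y else m w with hm'
    have hm'y : m' y = z := by simp [hm']
    have hm'z : m' z = y := by simp [hm', hzy]
    have hm'my : m' (m y) = m z := by simp [hm', d3.symm, hzmy.symm]
    have hm'mz : m' (m z) = m y := by simp [hm', d5.symm, d4.symm, d6.symm]
    have hm'other : ∀ w, w ≠ y → w ≠ z → w ≠ m y → w ≠ m z → m' w = m w := by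
      intro w h1 h2 h3 h4
      simp [hm', h1, h2, h3, h4]
    have hinv' : ∀ w, m' (m' w) = w := by
      intro w
      by_cases h1 : w = y
      · rw [h1, hm'y, hm'z]
      by_cases h2 : w = z
      · rw [h2, hm'z, hm'y]
      by_cases h3 : w = m y
      · rw [h3, hm'my, hm'mz]
      by_cases h4 : w = m z
      · rw [h4, hm'mz, hm'my]
      · rw [hm'other w h1 h2 h3 h4]
        have e1 : m w ≠ y := fun hc => h3 (by rw [← hc, hinv])
        have e2 : m w ≠ z := fun hc => h4 (by rw [← hc, hinv])
        have e3 : m w ≠ m y := fun hc => h1 (by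
          have := congrArg m hc; rwa [hinv, hinv] at this)
        have e4 : m w ≠ m z := fun hc => h2 (by
          have := congrArg m hc; rwa [hinv, hinv] at this)
        rw [hm'other (m w) e1 e2 e3 e4, hinv]
    have hne' : ∀ w, m' w ≠ w := by
      intro w
      by_cases h1 : w = y
      · rw [h1, hm'y]; exact hzy
      by_cases h2 : w = z
      · rw [h2, hm'z]; exact fun hc => hzy hc.symm
      by_cases h3 : w = m y
      · rw [h3, hm'my]; exact d6.symm
      by_cases h4 : w = m z
      · rw [h4, hm'mz]; exact d6
      · rw [hm'other w h1 h2 h3 h4]; exact hne w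
    have hle := hmin m' hinv' hne'
    -- contradiction: m' is strictly better
    set s : Finset V := {y, z, m y, m z} with hs
    have hsum4 : ∀ f : V → ℝ, ∑ x ∈ s, f x = f y + f z + f (m y) + f (m z) := by
      intro f
      rw [hs]
      rw [Finset.sum_insert (by simp [hzy.symm, d3, d5]),
        Finset.sum_insert (by simp [hzmy, d4]),
        Finset.sum_insert (by simp [d6]),
        Finset.sum_singleton]
      ring
    have hsplit : ∀ g : V → V, ∑ x : V, d x (g x) =
        (∑ x ∈ Finset.univ \ s, d x (g x)) + ∑ x ∈ s, d x (g x) :=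
      fun g => (Finset.sum_sdiff (Finset.subset_univ s)).symm
    have hsame : ∑ x ∈ Finset.univ \ s, d x (m' x) =
        ∑ x ∈ Finset.univ \ s, d x (m x) := by
      apply Finset.sum_congr rfl
      intro w hw
      rw [hs] at hw
      simp only [Finset.mem_sdiff, Finset.mem_univ, Finset.mem_insert,
        Finset.mem_singleton, true_and] at hw
      push_neg at hw
      rw [hm'other w hw.1 hw.2.1 hw.2.2.1 hw.2.2.2]
    have hlt2 : ∑ x : V, d x (m' x) < ∑ x : V, d x (m x) := by
      rw [hsplit m, hsplit m', hsame]
      have h1 : ∑ x ∈ s, d x (m' x) < ∑ x ∈ s, d x (m x) := by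
        rw [hsum4 (fun x => d x (m' x)), hsum4 (fun x => d x (m x))]
        simp only [hm'y, hm'z, hm'my, hm'mz, hinv]
        have e1 : d z y = d y z := dsymm z y
        have e2 : d (m z) (m y) = d (m y) (m z) := dsymm _ _
        have e3 : d (m y) y = d y (m y) := dsymm _ _
        have e4 : d (m z) z = d z (m z) := dsymm _ _
        linarith
      linarith
    linarith
  -- choose shortest paths
  choose P hP using fun x => dattain x (m x)
  refine ⟨P, hP, ?_⟩
  intro x y hyx hymx e hex hey
  have hmyx : m y ≠ x := by
    intro hc
    apply hymx
    rw [← hc, hinv]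
  have hmymx : m y ≠ m x := by
    intro hc
    apply hyx
    have := congrArg m hc
    rwa [hinv, hinv] at this
  have heG : e ∈ G.edgeSet := (P x).edges_subset_edgeSet hex
  revert hex hey heG
  induction e using Sym2.ind with
  | _ a b =>
    intro hex hey heG
    have hwt : 0 < wt s(a, b) := hpos _ heG
    have hkx := key (P x) a b hex
    have hky := key (P y) a b hey
    rw [hP x] at hkx
    rw [hP y] at hky
    -- core case analysis
    have core : ∀ a b : V, 0 < wt s(a, b) →
        d x a + wt s(a, b) + d b (m x) ≤ d x (m x) →
        (d y a + wt s(a, b) + d b (m y) ≤ d y (m y) ∨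
         d y b + wt s(a, b) + d a (m y) ≤ d y (m y)) → False := by
      intro a b hwt hx hy
      rcases hy with hy | hy
      · -- same orientation: match x with y, m x with m y
        apply exch x y hyx hymx
        have t1 : d x y ≤ d x a + d a y := dtri x a y
        have t2 : d (m x) (m y) ≤ d (m x) b + d b (m y) := dtri (m x) b (m y)
        have e1 : d a y = d y a := dsymm a y
        have e2 : d (m x) b = d b (m x) := dsymm (m x) b
        linarith
      · -- opposite orientation: match x with m y, m x with y
        have h := exch x (m y) hmyx hmymx
        rw [hinv] at h
        apply h
        have t1 : d x (m y) ≤ d x a + d a (m y) := dtri x a (m y)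
        have t2 : d (m x) y ≤ d (m x) b + d b y := dtri (m x) b y
        have e1 : d (m x) b = d b (m x) := dsymm (m x) b
        have e2 : d b y = d y b := dsymm b y
        have e3 : d (m y) y = d y (m y) := dsymm (m y) y
        linarith
    rcases hkx with hx1 | hx1
    · exact core a b hwt hx1 hky
    · have hswap : s(b, a) = s(a, b) := Sym2.eq_swap
      refine core b a (by rwa [hswap]) (by rwa [hswap]) ?_
      rw [hswap]
      exact hky.symm
end
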